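/- For a doubly symmetric periodic orbit with respect to two commuting linear anti-symplectic involutions L_1, L_2 (with L_1 L_2 symplectic), satisfying φ(0) ∈ Fix(L_1) and φ(T/4) ∈ Fix(L_2), the monodromy matrix is M = [L_1 V(T/4)^{-1} L_2 V(T/4)]^2. -/

import Mathlib

open Matrix Set

section Aux

variable {ι : Type*} [Fintype ι] [DecidableEq ι]

lemma norm_mulVec_le_aux (M : Matrix ι ι ℝ) (z : ι → ℝ) :
    ‖M *ᵥ z‖ ≤ (∑ i, ∑ j, |M i j|) * ‖z‖ := by
  have h0 : (0 : ℝ) ≤ ∑ i, ∑ j, |M i j| :=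
    Finset.sum_nonneg fun i _ => Finset.sum_nonneg fun j _ => abs_nonneg _
  rw [pi_norm_le_iff_of_nonneg (mul_nonneg h0 (norm_nonneg z))]
  intro i
  calc ‖(M *ᵥ z) i‖ = |∑ j, M i j * z j| := by
        simp [Matrix.mulVec, dotProduct, Real.norm_eq_abs]
    _ ≤ ∑ j, |M i j * z j| := Finset.abs_sum_le_sum_abs _ _
    _ ≤ ∑ j, |M i j| * ‖z‖ := by
        refine Finset.sum_le_sum fun j _ => ?_
        rw [abs_mul]
        exact mul_le_mul_of_nonneg_left
          (by simpa [Real.norm_eq_abs] using norm_le_pi_norm z j) (abs_nonneg _)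
    _ = (∑ j, |M i j|) * ‖z‖ := (Finset.sum_mul _ _ _).symm
    _ ≤ (∑ i, ∑ j, |M i j|) * ‖z‖ := by
        refine mul_le_mul_of_nonneg_right ?_ (norm_nonneg z)
        exact Finset.single_le_sum (f := fun i' => ∑ j, |M i' j|)
          (fun i _ => Finset.sum_nonneg fun j _ => abs_nonneg _) (Finset.mem_univ i)

/-- Global uniqueness for the linear ODE `u' = A t *ᵥ u`. -/
lemma ode_uniq_aux (A : ℝ → Matrix ι ι ℝ) (hAc : ∀ i j, Continuous fun t => A t i j)
    (u w : ℝ → ι → ℝ)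
    (hu : ∀ t, HasDerivAt u (A t *ᵥ u t) t)
    (hw : ∀ t, HasDerivAt w (A t *ᵥ w t) t)
    (t₀ t₁ : ℝ) (h : u t₀ = w t₀) : u t₁ = w t₁ := by
  set a : ℝ := min t₀ t₁ - 1 with ha
  set b : ℝ := max t₀ t₁ + 1 with hb
  have hab : a ≤ b := by
    have h1 : min t₀ t₁ ≤ max t₀ t₁ := (min_le_left _ _).trans (le_max_left _ _)
    simp only [ha, hb]; linarith
  set c : ℝ → ℝ := fun s => max a (min b s) with hc
  have hcc : Continuous c := continuous_const.max (continuous_const.min continuous_id)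
  have hcmem : ∀ s, c s ∈ Icc a b := fun s =>
    ⟨le_max_left _ _, max_le hab (min_le_left _ _)⟩
  have hcid : ∀ s ∈ Ioo a b, c s = s := by
    intro s hs
    simp only [hc]
    rw [min_eq_right hs.2.le, max_eq_right hs.1.le]
  set g : ℝ → ℝ := fun s => ∑ i, ∑ j, |A s i j| with hg
  have hgc : Continuous g := by
    refine continuous_finset_sum _ fun i _ => continuous_finset_sum _ fun j _ => ?_
    exact (hAc i j).abs
  obtain ⟨x₀, hx₀mem, hx₀⟩ := isCompact_Icc.exists_isMaxOn
    (Set.nonempty_Icc.2 hab) hgc.continuousOn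
  set C : ℝ := g x₀ with hC
  have hC0 : 0 ≤ C :=
    Finset.sum_nonneg fun i _ => Finset.sum_nonneg fun j _ => abs_nonneg _
  set K : NNReal := C.toNNReal with hK
  set v : ℝ → (ι → ℝ) → (ι → ℝ) := fun s x => A (c s) *ᵥ x with hv
  have hlip : ∀ s, LipschitzOnWith K (v s) univ := by
    intro s
    refine LipschitzOnWith.of_dist_le_mul fun x _ y _ => ?_
    rw [dist_eq_norm, dist_eq_norm]
    have hsub : v s x - v s y = A (c s) *ᵥ (x - y) := (Matrix.mulVec_sub _ _ _).symm
    rw [hsub]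
    calc ‖A (c s) *ᵥ (x - y)‖ ≤ (∑ i, ∑ j, |A (c s) i j|) * ‖x - y‖ :=
          norm_mulVec_le_aux _ _
      _ ≤ C * ‖x - y‖ :=
          mul_le_mul_of_nonneg_right (hx₀ (hcmem s)) (norm_nonneg _)
      _ ≤ (K : ℝ) * ‖x - y‖ := by
          refine mul_le_mul_of_nonneg_right ?_ (norm_nonneg _)
          simp [hK, Real.coe_toNNReal _ hC0]
  have ht₀ : t₀ ∈ Ioo a b := by
    constructor
    · have := min_le_left t₀ t₁; simp only [ha]; linarith
    · have := le_max_left t₀ t₁; simp only [hb]; linarith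
  have key : EqOn u w (Icc a b) := by
    refine ODE_solution_unique_of_mem_Icc (v := v) (s := fun _ => univ) (fun t _ => hlip t) ht₀
      (fun t _ => (hu t).continuousAt.continuousWithinAt) ?_ (fun _ _ => trivial)
      (fun t _ => (hw t).continuousAt.continuousWithinAt) ?_ (fun _ _ => trivial) h
    · intro t ht; simpa [hv, hcid t ht] using hu t
    · intro t ht; simpa [hv, hcid t ht] using hw t
  refine key ?_
  constructor
  · have := min_le_right t₀ t₁; simp only [ha]; linarith
  · have := le_max_right t₀ t₁; simp only [hb]; linarith

lemma hasDerivAt_mulVec_aux {f : ℝ → Matrix ι ι ℝ} {f' : Matrix ι ι ℝ} {x : ι → ℝ} {t : ℝ}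
    (hf : ∀ i j, HasDerivAt (fun s => f s i j) (f' i j) t) :
    HasDerivAt (fun s => f s *ᵥ x) (f' *ᵥ x) t := by
  rw [hasDerivAt_pi]
  intro i
  simpa [Matrix.mulVec, dotProduct] using
    HasDerivAt.fun_sum (fun j (_ : j ∈ Finset.univ) => (hf i j).mul_const (x j))

lemma matrix_ext_mulVec_aux {M N : Matrix ι ι ℝ} (h : ∀ x, M *ᵥ x = N *ᵥ x) : M = N := by
  ext i j
  have := congrFun (h (Pi.single j 1)) i
  simpa [Matrix.mulVec_single] using this

end Aux

/-- For a doubly symmetric periodic orbit with respect to two commuting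
linear anti-symplectic involutions `L₁, L₂` (with `L₁ L₂` symplectic), satisfying
`φ(0) ∈ Fix(L₁)` (so `A(-t) = -L₁ A(t) L₁`) and `φ(T/4) ∈ Fix(L₂)` (so
`A(T/2 - t) = -L₂ A(t) L₂`), the monodromy matrix is
`M = V(T) = [L₁ V(T/4)⁻¹ L₂ V(T/4)]²`. -/
theorem monodromy_doubly_symmetric
    (n : ℕ) (T : ℝ) (hT : 0 < T)
    (J L₁ L₂ : Matrix (Fin n ⊕ Fin n) (Fin n ⊕ Fin n) ℝ)
    (hJ : J = Matrix.fromBlocks 0 1 (-1) 0)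
    (hL₁ : L₁ * L₁ = 1) (hL₂ : L₂ * L₂ = 1)
    (hcomm : L₁ * L₂ = L₂ * L₁)
    (hL₁J : L₁ * J * L₁ = -J) (hL₂J : L₂ * J * L₂ = -J)
    (hsymp : (L₁ * L₂)ᵀ * J * (L₁ * L₂) = J)
    (A : ℝ → Matrix (Fin n ⊕ Fin n) (Fin n ⊕ Fin n) ℝ)
    (hAcont : ∀ i j, Continuous fun t => A t i j)
    (hA₁ : ∀ t, A (-t) = -(L₁ * A t * L₁))
    (hA₂ : ∀ t, A (T / 2 - t) = -(L₂ * A t * L₂))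
    (V : ℝ → Matrix (Fin n ⊕ Fin n) (Fin n ⊕ Fin n) ℝ)
    (hV0 : V 0 = 1)
    (hV : ∀ t i j, HasDerivAt (fun s => V s i j) ((A t * V t) i j) t) :
    V T = (L₁ * (V (T / 4))⁻¹ * L₂ * V (T / 4)) ^ 2 := by
  -- vector solutions of the form `s ↦ (V s * C) *ᵥ x`
  have hsol₁ : ∀ (C : Matrix (Fin n ⊕ Fin n) (Fin n ⊕ Fin n) ℝ) (x : Fin n ⊕ Fin n → ℝ),
      ∀ t : ℝ, HasDerivAt (fun s => (V s * C) *ᵥ x) (A t *ᵥ ((V t * C) *ᵥ x)) t := by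
    intro C x t
    have hent : ∀ i j, HasDerivAt (fun s => (V s * C) i j) ((A t * V t * C) i j) t := by
      intro i j
      simpa [Matrix.mul_apply, Finset.sum_mul] using
        HasDerivAt.fun_sum (fun k (_ : k ∈ Finset.univ) => (hV t i k).mul_const (C k j))
    have := hasDerivAt_mulVec_aux (x := x) hent
    rwa [show A t * V t * C = A t * (V t * C) by rw [Matrix.mul_assoc],
      ← Matrix.mulVec_mulVec] at this
  -- vector solutions of the form `s ↦ (B * V (e - s)) *ᵥ x`, for a reflected symmetry
  have hsol₂ : ∀ (B : Matrix (Fin n ⊕ Fin n) (Fin n ⊕ Fin n) ℝ) (e : ℝ)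
      (x : Fin n ⊕ Fin n → ℝ) (t : ℝ),
      HasDerivAt (fun s => (B * V (e - s)) *ᵥ x)
        ((-(B * A (e - t) * V (e - t))) *ᵥ x) t := by
    intro B e x t
    have hent : ∀ i j, HasDerivAt (fun s => (B * V (e - s)) i j)
        ((-(B * A (e - t) * V (e - t))) i j) t := by
      intro i j
      have h1 : HasDerivAt (fun s : ℝ => e - s) (-1 : ℝ) t := by
        simpa using (hasDerivAt_id t).const_sub e
      have h2 : ∀ k, HasDerivAt (fun s => V (e - s) k j)
          (-((A (e - t) * V (e - t)) k j)) t := by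
        intro k
        have := (hV (e - t) k j).comp t h1
        simpa [Function.comp_def, mul_comm] using this
      have hsum := HasDerivAt.fun_sum (fun k (_ : k ∈ Finset.univ) =>
        HasDerivAt.const_mul (B i k) (h2 k))
      have hfun : (fun s => (B * V (e - s)) i j)
          = fun y => ∑ k, B i k * V (e - y) k j := by
        funext y; rw [Matrix.mul_apply]
      have hval : ((-(B * A (e - t) * V (e - t))) i j)
          = ∑ k, B i k * -((A (e - t) * V (e - t)) k j) := by
        simp only [Matrix.mul_assoc, Matrix.neg_apply, mul_neg,
          Finset.sum_neg_distrib, Matrix.mul_apply]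
      rw [hfun, hval]
      exact hsum
    exact hasDerivAt_mulVec_aux hent
  -- Relation 2 : V t * L₁ = L₁ * V (-t)
  have Rel2 : ∀ t, V t * L₁ = L₁ * V (-t) := by
    intro t
    apply matrix_ext_mulVec_aux
    intro x
    have hu : ∀ s : ℝ, HasDerivAt (fun r => (V r * L₁) *ᵥ x)
        (A s *ᵥ ((V s * L₁) *ᵥ x)) s := fun s => hsol₁ L₁ x s
    have hw : ∀ s : ℝ, HasDerivAt (fun r => (L₁ * V (-r)) *ᵥ x)
        (A s *ᵥ ((L₁ * V (-s)) *ᵥ x)) s := by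
      intro s
      have h := hsol₂ L₁ 0 x s
      have key : -(L₁ * A (0 - s) * V (0 - s)) = A s * (L₁ * V (-s)) := by
        rw [zero_sub, hA₁]
        calc -(L₁ * -(L₁ * A s * L₁) * V (-s))
            = L₁ * L₁ * A s * (L₁ * V (-s)) := by noncomm_ring
          _ = A s * (L₁ * V (-s)) := by rw [hL₁, Matrix.one_mul]
      rw [key, ← Matrix.mulVec_mulVec] at h
      simpa [zero_sub] using h
    have h0 : (fun r => (V r * L₁) *ᵥ x) 0 = (fun r => (L₁ * V (-r)) *ᵥ x) 0 := by
      simp [hV0]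
    exact ode_uniq_aux A hAcont _ _ hu hw 0 t h0
  -- Relation 1 : V t * (L₂ * V (T/2)) = L₂ * V (T/2 - t)
  have Rel1 : ∀ t, V t * (L₂ * V (T / 2)) = L₂ * V (T / 2 - t) := by
    intro t
    apply matrix_ext_mulVec_aux
    intro x
    have hu : ∀ s : ℝ, HasDerivAt (fun r => (V r * (L₂ * V (T / 2))) *ᵥ x)
        (A s *ᵥ ((V s * (L₂ * V (T / 2))) *ᵥ x)) s := fun s => hsol₁ _ x s
    have hw : ∀ s : ℝ, HasDerivAt (fun r => (L₂ * V (T / 2 - r)) *ᵥ x)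
        (A s *ᵥ ((L₂ * V (T / 2 - s)) *ᵥ x)) s := by
      intro s
      have h := hsol₂ L₂ (T / 2) x s
      have key : -(L₂ * A (T / 2 - s) * V (T / 2 - s)) = A s * (L₂ * V (T / 2 - s)) := by
        rw [hA₂]
        calc -(L₂ * -(L₂ * A s * L₂) * V (T / 2 - s))
            = L₂ * L₂ * A s * (L₂ * V (T / 2 - s)) := by noncomm_ring
          _ = A s * (L₂ * V (T / 2 - s)) := by rw [hL₂, Matrix.one_mul]
      rwa [key, ← Matrix.mulVec_mulVec] at h
    have h0 : (fun r => (V r * (L₂ * V (T / 2))) *ᵥ x) 0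
        = (fun r => (L₂ * V (T / 2 - r)) *ᵥ x) 0 := by
      simp [hV0]
    exact ode_uniq_aux A hAcont _ _ hu hw 0 t h0
  set M : Matrix (Fin n ⊕ Fin n) (Fin n ⊕ Fin n) ℝ := V (T / 4) with hM
  -- M is invertible
  have hdet : IsUnit M.det := by
    by_contra hcon
    have hdet0 : M.det = 0 := by
      rcases eq_or_ne M.det 0 with h | h
      · exact h
      · exact absurd (isUnit_iff_ne_zero.2 h) hcon
    obtain ⟨x, hx0, hx⟩ := Matrix.exists_mulVec_eq_zero_iff.2 hdet0
    -- the solution `s ↦ V s *ᵥ x` vanishes at `T/4`, hence everywhere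
    have hu : ∀ s : ℝ, HasDerivAt (fun r => (V r * 1) *ᵥ x)
        (A s *ᵥ ((V s * 1) *ᵥ x)) s := fun s => hsol₁ 1 x s
    have hw : ∀ s : ℝ, HasDerivAt (fun _ : ℝ => (0 : Fin n ⊕ Fin n → ℝ))
        (A s *ᵥ (0 : Fin n ⊕ Fin n → ℝ)) s := by
      intro s
      simpa [Matrix.mulVec_zero] using (hasDerivAt_const s (0 : Fin n ⊕ Fin n → ℝ))
    have h0 : (fun r => (V r * 1) *ᵥ x) (T / 4) = (fun _ : ℝ => (0 : Fin n ⊕ Fin n → ℝ)) (T / 4) := by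
      simp [← hM, hx]
    have := ode_uniq_aux A hAcont _ _ hu hw (T / 4) 0 h0
    simp only [Matrix.mul_one, hV0, Matrix.one_mulVec] at this
    exact hx0 this
  have hinv1 : M⁻¹ * M = 1 := Matrix.nonsing_inv_mul M hdet
  -- V(T/2) in terms of M
  have F2 : M * (L₂ * V (T / 2)) = L₂ * M := by
    have := Rel1 (T / 4)
    rw [show T / 2 - T / 4 = T / 4 by ring] at this
    exact this
  have hVT2 : V (T / 2) = L₂ * (M⁻¹ * (L₂ * M)) := by
    have h1 : M⁻¹ * (M * (L₂ * V (T / 2))) = M⁻¹ * (L₂ * M) := by rw [F2]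
    rw [← Matrix.mul_assoc, hinv1, Matrix.one_mul] at h1
    rw [← h1, ← Matrix.mul_assoc, hL₂, Matrix.one_mul]
  -- V(-(T/2)) in terms of V(T/2)
  have hVm : V (-(T / 2)) = L₁ * (V (T / 2) * L₁) := by
    have h := Rel2 (T / 2)
    rw [h, ← Matrix.mul_assoc, hL₁, Matrix.one_mul]
  -- V T in terms of V(-(T/2)) and V(T/2)
  have F3 : V (-(T / 2)) * (L₂ * V (T / 2)) = L₂ * V T := by
    have := Rel1 (-(T / 2))
    rw [show T / 2 - -(T / 2) = T by ring] at this
    exact this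
  have hVT : V T = L₂ * (V (-(T / 2)) * (L₂ * V (T / 2))) := by
    rw [F3, ← Matrix.mul_assoc, hL₂, Matrix.one_mul]
  -- final algebra
  have hL₂' : ∀ X : Matrix (Fin n ⊕ Fin n) (Fin n ⊕ Fin n) ℝ, L₂ * (L₂ * X) = X := by
    intro X; rw [← Matrix.mul_assoc, hL₂, Matrix.one_mul]
  have hcomm' : ∀ X : Matrix (Fin n ⊕ Fin n) (Fin n ⊕ Fin n) ℝ,
      L₂ * (L₁ * X) = L₁ * (L₂ * X) := by
    intro X; rw [← Matrix.mul_assoc, ← hcomm, Matrix.mul_assoc]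
  rw [hVT, hVm, hVT2, pow_two]
  simp only [Matrix.mul_assoc]
  simp only [hL₂', hcomm']
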